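/- Let I be a finite group in which any two subgroups permute, and let A, B be distinct maximal subgroups of I with H = A ∩ B. Then [I : B] = [A : H] and [I : A] = [B : H], and H is a maximal subgroup of both A and B. -/

import Mathlib

open Pointwise

/-- If the carriers of two subgroups commute as sets, the carrier of their sup
is their set product. -/
lemma coe_sup_of_mul_comm {G : Type*} [Group G] (A B : Subgroup G)
    (h : (A : Set G) * (B : Set G) = (B : Set G) * (A : Set G)) :
    ((A ⊔ B : Subgroup G) : Set G) = (A : Set G) * (B : Set G) := by
  let S : Subgroup G :=
  { carrier := (A : Set G) * (B : Set G)
    one_mem' := ⟨1, A.one_mem, 1, B.one_mem, mul_one 1⟩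
    mul_mem' := by
      rintro x y ⟨a, ha, b, hb, rfl⟩ ⟨a', ha', b', hb', rfl⟩
      have : b * a' ∈ (A : Set G) * (B : Set G) := by
        rw [h]; exact ⟨b, hb, a', ha', rfl⟩
      obtain ⟨a'', ha'', b'', hb'', he⟩ := this
      exact ⟨a * a'', A.mul_mem ha ha'', b'' * b', B.mul_mem hb'' hb',
        by simp only at he ⊢; rw [← mul_assoc, mul_assoc a, he, mul_assoc, mul_assoc, mul_assoc]⟩
    inv_mem' := by
      rintro x ⟨a, ha, b, hb, rfl⟩
      show ((a * b)⁻¹ : G) ∈ (A : Set G) * (B : Set G)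
      rw [h]
      exact ⟨b⁻¹, B.inv_mem hb, a⁻¹, A.inv_mem ha, (mul_inv_rev a b).symm⟩ }
  have h1 : A ⊔ B ≤ S := sup_le
    (fun a ha => ⟨a, ha, 1, B.one_mem, mul_one a⟩)
    (fun b hb => ⟨1, A.one_mem, b, hb, one_mul b⟩)
  have h2 : (S : Set G) ⊆ ((A ⊔ B : Subgroup G) : Set G) := by
    rintro x ⟨a, ha, b, hb, rfl⟩
    exact mul_mem (le_sup_left (a := A) (b := B) ha) (le_sup_right (a := A) (b := B) hb)
  exact le_antisymm h1 h2

/-- If `A * B = univ` then `[G:B] = [A : A ⊓ B]`. -/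
lemma index_eq_relindex_of_mul_eq_univ {G : Type*} [Group G] (A B : Subgroup G)
    (h : (A : Set G) * (B : Set G) = Set.univ) :
    B.index = B.relIndex A := by
  rw [Subgroup.index, Subgroup.relIndex, Subgroup.index]
  refine (Nat.card_congr (Equiv.ofBijective
    (Quotient.map' Subtype.val (fun a b hab => ?_) :
      A ⧸ B.subgroupOf A → G ⧸ B) ⟨?_, ?_⟩)).symm
  · rw [QuotientGroup.leftRel_apply] at hab ⊢
    exact hab
  · intro x y
    induction x using Quotient.inductionOn'
    induction y using Quotient.inductionOn'
    intro hxy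
    simp only [Quotient.map'_mk''] at hxy
    apply Quotient.sound'
    rw [QuotientGroup.leftRel_apply] at *
    have := Quotient.exact' hxy
    rw [QuotientGroup.leftRel_apply] at this
    exact this
  · intro x
    induction x using Quotient.inductionOn'
    rename_i g
    have : g ∈ (A : Set G) * (B : Set G) := h ▸ Set.mem_univ g
    obtain ⟨a, ha, b, hb, rfl⟩ := this
    refine ⟨Quotient.mk'' ⟨a, ha⟩, ?_⟩
    simp only [Quotient.map'_mk'']
    apply Quotient.sound'
    rw [QuotientGroup.leftRel_apply]
    simpa using hb

/-- In a finite quasi-Hamiltonian group, if `A ≠ B` are maximal subgroups and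
`H = A ∩ B`, then `[I:B] = [A:H]`, `[I:A] = [B:H]`, and `H` is maximal in both
`A` and `B`. -/
theorem stmt5 {I : Type*} [Group I] [Finite I]
    (hperm : ∀ I₁ I₂ : Subgroup I, (I₁ : Set I) * (I₂ : Set I) = (I₂ : Set I) * (I₁ : Set I))
    (A B : Subgroup I) (hA : IsCoatom A) (hB : IsCoatom B) (hAB : A ≠ B) :
    B.index = (A ⊓ B).relIndex A ∧ A.index = (A ⊓ B).relIndex B ∧
      (A ⊓ B < A ∧ ∀ K : Subgroup I, A ⊓ B < K → K ≤ A → K = A) ∧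
      (A ⊓ B < B ∧ ∀ K : Subgroup I, A ⊓ B < K → K ≤ B → K = B) := by
  -- A ⊔ B = ⊤
  have hsup : A ⊔ B = ⊤ := by
    by_contra hne
    have h1 : A ≤ A ⊔ B := le_sup_left
    have h2 : A = A ⊔ B := by
      by_contra h
      exact hne (hA.2 _ (lt_of_le_of_ne h1 h))
    have hBA : B ≤ A := h2 ▸ le_sup_right
    rcases eq_or_lt_of_le hBA with h | h
    · exact hAB h.symm
    · exact hA.1 (hB.2 _ h)
  have hABuniv : (A : Set I) * (B : Set I) = Set.univ := by
    rw [← coe_sup_of_mul_comm A B (hperm A B), hsup]; rfl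
  have hBAuniv : (B : Set I) * (A : Set I) = Set.univ := by
    rw [← hperm A B]; exact hABuniv
  -- index equalities
  refine ⟨?_, ?_, ⟨?_, ?_⟩, ⟨?_, ?_⟩⟩
  · rw [Subgroup.inf_relIndex_left]
    exact index_eq_relindex_of_mul_eq_univ A B hABuniv
  · rw [Subgroup.inf_relIndex_right]
    exact index_eq_relindex_of_mul_eq_univ B A hBAuniv
  · refine lt_of_le_of_ne inf_le_left fun h => ?_
    have hAB' : A ≤ B := by rw [← h]; exact inf_le_right
    rcases eq_or_lt_of_le hAB' with h' | h'
    · exact hAB h'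
    · exact hB.1 (hA.2 _ h')
  · intro K hK hKA
    have hKB : ¬ K ≤ B := fun h => hK.not_ge (le_inf hKA h)
    have hKB' : K ⊔ B = ⊤ := hB.2 _ (lt_of_le_of_ne le_sup_right
      (fun h => hKB (h ▸ le_sup_left)))
    have hKBuniv : (K : Set I) * (B : Set I) = Set.univ := by
      rw [← coe_sup_of_mul_comm K B (hperm K B), hKB']; rfl
    refine le_antisymm hKA fun a ha => ?_
    have : a ∈ (K : Set I) * (B : Set I) := hKBuniv ▸ Set.mem_univ a
    obtain ⟨k, hk, b, hb, rfl⟩ := this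
    have hbA : b ∈ A := by
      have : k⁻¹ * (k * b) ∈ A := A.mul_mem (A.inv_mem (hKA hk)) ha
      simpa using this
    exact K.mul_mem hk (hK.le ⟨hbA, hb⟩)
  · refine lt_of_le_of_ne inf_le_right fun h => ?_
    have hBA' : B ≤ A := by rw [← h]; exact inf_le_left
    rcases eq_or_lt_of_le hBA' with h' | h'
    · exact hAB h'.symm
    · exact hA.1 (hB.2 _ h')
  · intro K hK hKB
    have hKA : ¬ K ≤ A := fun h => hK.not_ge (le_inf h hKB)
    have hKA' : K ⊔ A = ⊤ := hA.2 _ (lt_of_le_of_ne le_sup_right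
      (fun h => hKA (h ▸ le_sup_left)))
    have hKAuniv : (K : Set I) * (A : Set I) = Set.univ := by
      rw [← coe_sup_of_mul_comm K A (hperm K A), hKA']; rfl
    refine le_antisymm hKB fun b hb => ?_
    have : b ∈ (K : Set I) * (A : Set I) := hKAuniv ▸ Set.mem_univ b
    obtain ⟨k, hk, a, ha, rfl⟩ := this
    have haB : a ∈ B := by
      have : k⁻¹ * (k * a) ∈ B := B.mul_mem (B.inv_mem (hKB hk)) hb
      simpa using this
    exact K.mul_mem hk (hK.le ⟨ha, haB⟩)
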